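/- A topological space X is productively Fréchet if and only if the product X × Y is strongly Fréchet for every strongly Fréchet topological space Y, and this holds if and only if X × Y is Fréchet-Urysohn for every strongly Fréchet topological space Y. -/

import Mathlib

open Filter Topology Set
universe u

/-- Two filters mesh if every member of one intersects every member of the other. -/
def Meshes {X : Type*} (F H : Filter X) : Prop :=
  ∀ A ∈ F, ∀ B ∈ H, (A ∩ B).Nonempty

/-- A sequence `x` meshes with a filter `H` if every tail of the sequence meets every
member of `H`. -/
def SeqMeshes {X : Type*} (x : ℕ → X) (H : Filter X) : Prop :=
  ∀ B ∈ H, ∀ k : ℕ, ∃ n ≥ k, x n ∈ B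

/-- The adherence of a filter: the intersection of the closures of its members. -/
def adh {X : Type*} [TopologicalSpace X] (H : Filter X) : Set X :=
  ⋂ A ∈ H, closure A

/-- The sequential adherence of a filter: the set of limits of convergent sequences
meshing with the filter. -/
def adhSeq {X : Type*} [TopologicalSpace X] (H : Filter X) : Set X :=
  {l | ∃ x : ℕ → X, Tendsto x atTop (𝓝 l) ∧ SeqMeshes x H}

/-- A filter `F` is strongly Fréchet if for every countably generated filter `H` meshing
with `F` there is a (proper) countably generated filter finer than both `F` and `H`. -/
def Filter.StronglyFrechet {X : Type*} (F : Filter X) : Prop :=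
  ∀ H : Filter X, H.IsCountablyGenerated → Meshes F H →
    ∃ G : Filter X, G.IsCountablyGenerated ∧ G.NeBot ∧ G ≤ F ∧ G ≤ H

/-- A space is productively Fréchet if `adh H ⊆ adhSeq H` for every strongly Fréchet
filter `H` on it. -/
def ProductivelyFrechetSpace (X : Type*) [TopologicalSpace X] : Prop :=
  ∀ H : Filter X, H.StronglyFrechet → adh H ⊆ adhSeq H
/-- A strongly Fréchet space: whenever `(A n)` is a decreasing sequence of subsets and
`x` lies in the closure of every `A n`, there are points `p n ∈ A n` converging to `x`. -/
def StronglyFrechetSpace (X : Type*) [TopologicalSpace X] : Prop :=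
  ∀ A : ℕ → Set X, (∀ n, A (n + 1) ⊆ A n) → ∀ x : X, (∀ n, x ∈ closure (A n)) →
    ∃ p : ℕ → X, (∀ n, p n ∈ A n) ∧ Tendsto p atTop (𝓝 x)

/-- A strongly Fréchet space is Fréchet-Urysohn. -/
lemma sf_imp_fu {Z : Type*} [TopologicalSpace Z] (h : StronglyFrechetSpace Z) :
    FrechetUrysohnSpace Z := by
  constructor
  intro s x hx
  obtain ⟨p, hp, ht⟩ := h (fun _ => s) (fun _ => subset_rfl) x (fun _ => hx)
  exact ⟨p, hp, ht⟩

/-- If `X` is productively Fréchet and `Y` is strongly Fréchet, then `X × Y` is strongly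
Fréchet. -/
lemma prodF_imp_sf_prod {X Y : Type*} [TopologicalSpace X] [TopologicalSpace Y]
    (hP : ProductivelyFrechetSpace X) (hY : StronglyFrechetSpace Y) :
    StronglyFrechetSpace (X × Y) := by
  rintro A hA ⟨x, y⟩ hcl
  have hAnti : Antitone A := antitone_nat_of_succ_le hA
  set Hs : ℕ → Set Y → Set X := fun n V => {z | ∃ w ∈ V, (z, w) ∈ A n} with hHs
  have hmono : ∀ {n m : ℕ} {V W : Set Y}, n ≤ m → W ⊆ V → Hs m W ⊆ Hs n V := by
    rintro n m V W hnm hWV z ⟨w, hw, hzw⟩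
    exact ⟨w, hWV hw, hAnti hnm hzw⟩
  set H : Filter X :=
    { sets := {S | ∃ n, ∃ V ∈ 𝓝 y, Hs n V ⊆ S}
      univ_sets := ⟨0, univ, univ_mem, subset_univ _⟩
      sets_of_superset := fun ⟨n, V, hV, hsub⟩ hST => ⟨n, V, hV, hsub.trans hST⟩
      inter_sets := fun ⟨n, V, hV, hS⟩ ⟨m, W, hW, hT⟩ =>
        ⟨max n m, V ∩ W, inter_mem hV hW, fun z hz =>
          ⟨hS (hmono (le_max_left n m) inter_subset_left hz),
           hT (hmono (le_max_right n m) inter_subset_right hz)⟩⟩ } with hHdef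
  have memH : ∀ n, ∀ V ∈ 𝓝 y, Hs n V ∈ H := fun n V hV => ⟨n, V, hV, subset_rfl⟩
  have hadh : x ∈ adh H := by
    rw [adh, mem_iInter₂]
    rintro S ⟨n, V, hV, hsub⟩
    refine closure_mono hsub ?_
    rw [mem_closure_iff_nhds]
    intro U hU
    obtain ⟨⟨z, w⟩, ⟨hzU, hwV⟩, hzw⟩ :=
      (mem_closure_iff_nhds.1 (hcl n)) (U ×ˢ V) (prod_mem_nhds hU hV)
    exact ⟨z, hzU, w, hwV, hzw⟩
  have hSF : H.StronglyFrechet := by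
    intro K hKcg hmesh
    haveI := hKcg
    obtain ⟨Kb, hKanti, hKmem⟩ := K.exists_antitone_seq
    set C : ℕ → Set Y := fun m => {w | ∃ z ∈ Kb m, (z, w) ∈ A m} with hC
    have hCdec : ∀ m, C (m + 1) ⊆ C m := by
      rintro m w ⟨z, hz, h⟩
      exact ⟨z, hKanti (Nat.le_succ m) hz, hA m h⟩
    have hyC : ∀ m, y ∈ closure (C m) := by
      intro m
      rw [mem_closure_iff_nhds]
      intro V hV
      obtain ⟨z, ⟨w, hwV, hzw⟩, hzK⟩ :=
        hmesh _ (memH m V hV) _ (hKmem.2 ⟨m, subset_rfl⟩)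
      exact ⟨w, hwV, z, hzK, hzw⟩
    obtain ⟨w, hwC, hwy⟩ := hY C hCdec y hyC
    choose z hzK hzA using hwC
    refine ⟨Filter.map z atTop, inferInstance, Filter.map_neBot, ?_, ?_⟩
    · rintro S ⟨n, V, hV, hsub⟩
      rw [mem_map]
      filter_upwards [hwy hV, eventually_ge_atTop n] with m hwV hmn
      exact hsub ⟨w m, hwV, hAnti hmn (hzA m)⟩
    · intro S hS
      obtain ⟨j, hj⟩ := hKmem.1 hS
      rw [mem_map]
      filter_upwards [eventually_ge_atTop j] with m hm
      exact hj (hKanti hm (hzK m))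
  obtain ⟨xs, hxs, hxsm⟩ := hP H hSF hadh
  set D : ℕ → Set Y := fun n => {w | ∃ m ≥ n, (xs m, w) ∈ A n} with hD
  have hDdec : ∀ n, D (n + 1) ⊆ D n := by
    rintro n w ⟨m, hm, h⟩
    exact ⟨m, le_trans (Nat.le_succ n) hm, hA n h⟩
  have hyD : ∀ n, y ∈ closure (D n) := by
    intro n
    rw [mem_closure_iff_nhds]
    intro V hV
    obtain ⟨m, hm, w, hwV, hw⟩ := hxsm (Hs n V) (memH n V hV) n
    exact ⟨w, hwV, m, hm, hw⟩
  obtain ⟨w, hwD, hwy⟩ := hY D hDdec y hyD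
  choose m hmge hmA using hwD
  refine ⟨fun n => (xs (m n), w n), fun n => hmA n, ?_⟩
  rw [nhds_prod_eq]
  exact (hxs.comp (tendsto_atTop_mono hmge tendsto_id)).prodMk hwy

/-- The auxiliary topology on `Option X` attached to a filter `H` on `X`: points of `X`
are isolated and neighborhoods of `none` are generated by members of `H`. -/
def optTop {X : Type u} (H : Filter X) : TopologicalSpace (Option X) where
  IsOpen S := none ∈ S → some ⁻¹' S ∈ H
  isOpen_univ := fun _ => univ_mem
  isOpen_inter := fun S T hS hT h => by
    rw [Set.preimage_inter]
    exact inter_mem (hS h.1) (hT h.2)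
  isOpen_sUnion := fun C hC h => by
    obtain ⟨S, hSC, hS⟩ := h
    exact mem_of_superset (hC S hSC hS) (preimage_mono (subset_sUnion_of_mem hSC))

lemma optTop_mem_nhds_none {X : Type u} (H : Filter X) {S : Set (Option X)} :
    S ∈ @nhds (Option X) (optTop H) none ↔ none ∈ S ∧ some ⁻¹' S ∈ H := by
  letI := optTop H
  rw [mem_nhds_iff]
  constructor
  · rintro ⟨U, hUS, hU, hnU⟩
    exact ⟨hUS hnU, mem_of_superset (hU hnU) (preimage_mono hUS)⟩
  · rintro ⟨hnS, hpre⟩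
    refine ⟨insert none (some '' (some ⁻¹' S)), ?_, ?_, mem_insert _ _⟩
    · rintro a (rfl | ⟨z, hz, rfl⟩)
      · exact hnS
      · exact hz
    · intro _
      exact mem_of_superset hpre fun z hz => Or.inr ⟨z, hz, rfl⟩

lemma fu_imp_prodF {X : Type u} [TopologicalSpace X]
    (h : ∀ (Y : Type u) (_ : TopologicalSpace Y),
        StronglyFrechetSpace Y → FrechetUrysohnSpace (X × Y)) :
    ProductivelyFrechetSpace X := by
  intro H hH x hx
  letI tY : TopologicalSpace (Option X) := optTop H
  have hnone : ∀ S : Set (Option X), S ∈ 𝓝 (none : Option X) ↔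
      none ∈ S ∧ some ⁻¹' S ∈ H := fun S => optTop_mem_nhds_none H
  have hSFY : StronglyFrechetSpace (Option X) := by
    intro A hA y hycl
    have hAnti : Antitone A := antitone_nat_of_succ_le hA
    match y with
    | some a =>
      have hopen : IsOpen ({some a} : Set (Option X)) := by
        intro hmem
        simp at hmem
      have hmem : ∀ n, some a ∈ A n := by
        intro n
        obtain ⟨p, hp1, hp2⟩ :=
          (mem_closure_iff_nhds.1 (hycl n)) _ (hopen.mem_nhds rfl)
        rwa [mem_singleton_iff.1 hp1] at hp2
      exact ⟨fun _ => some a, hmem, tendsto_const_nhds⟩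
    | none =>
      by_cases hall : ∀ n, none ∈ A n
      · exact ⟨fun _ => none, hall, tendsto_const_nhds⟩
      · push_neg at hall
        obtain ⟨N, hN⟩ := hall
        set A' : ℕ → Set X := fun n => some ⁻¹' A (n + N) with hA'
        have key : ∀ n, ∀ B ∈ H, (A' n ∩ B).Nonempty := by
          intro n B hB
          have h1 : insert none (some '' B) ∈ 𝓝 (none : Option X) :=
            (hnone _).2 ⟨mem_insert _ _,
              mem_of_superset hB fun z hz => Or.inr ⟨z, hz, rfl⟩⟩
          obtain ⟨p, hp1, hp2⟩ := (mem_closure_iff_nhds.1 (hycl (n + N))) _ h1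
          rcases hp1 with rfl | ⟨z, hzB, rfl⟩
          · exact absurd (hAnti (Nat.le_add_left N n) hp2) hN
          · exact ⟨z, hp2, hzB⟩
        have hA'anti : Antitone A' := fun a b hab =>
          preimage_mono (hAnti (Nat.add_le_add_right hab N))
        have hdir : Directed (· ≥ ·) fun n => 𝓟 (A' n) := fun a b =>
          ⟨max a b, principal_mono.2 (hA'anti (le_max_left _ _)),
            principal_mono.2 (hA'anti (le_max_right _ _))⟩
        have hmemK : ∀ S : Set X, S ∈ ⨅ n, 𝓟 (A' n) ↔ ∃ n, A' n ⊆ S := by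
          intro S
          rw [mem_iInf_of_directed hdir]
          simp [mem_principal]
        have hmesh : Meshes H (⨅ n, 𝓟 (A' n)) := by
          intro B hB S hS
          obtain ⟨n, hn⟩ := (hmemK S).1 hS
          obtain ⟨z, hz1, hz2⟩ := key n B hB
          exact ⟨z, hz2, hn hz1⟩
        obtain ⟨G, hGcg, hGne, hGH, hGK⟩ :=
          hH (⨅ n, 𝓟 (A' n)) (isCountablyGenerated_seq A') hmesh
        haveI := hGcg
        haveI := hGne
        obtain ⟨Gb, hGb⟩ := G.exists_antitone_basis
        have hGmem : ∀ n, Gb n ∩ A' n ∈ G := fun n =>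
          inter_mem (hGb.mem n) (hGK ((hmemK _).2 ⟨n, subset_rfl⟩))
        choose z hz using fun n => Filter.nonempty_of_mem (hGmem n)
        refine ⟨fun n => some (z (n - N)), ?_, ?_⟩
        · intro n
          exact hAnti (le_tsub_add : n ≤ n - N + N) (hz (n - N)).2
        · rw [Filter.tendsto_def]
          intro S hS
          obtain ⟨-, hpre⟩ := (hnone S).1 hS
          obtain ⟨k, hk⟩ := hGb.mem_iff.1 (hGH hpre)
          filter_upwards [eventually_ge_atTop (k + N)] with n hn
          exact hk (hGb.antitone (Nat.le_sub_of_add_le hn) (hz (n - N)).1)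
  haveI hFU := h (Option X) tY hSFY
  set D : Set (X × Option X) := {p | ∃ z : X, p = (z, some z)} with hDdef
  have hxcl : (x, (none : Option X)) ∈ closure D := by
    rw [mem_closure_iff_nhds]
    intro t ht
    rw [nhds_prod_eq, mem_prod_iff] at ht
    obtain ⟨U, hU, V, hV, hUV⟩ := ht
    obtain ⟨-, hpre⟩ := (hnone V).1 hV
    have hxc : x ∈ closure (some ⁻¹' V) := by
      have := hx
      rw [adh, mem_iInter₂] at this
      exact this _ hpre
    obtain ⟨z, hzU, hzV⟩ := (mem_closure_iff_nhds.1 hxc) U hU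
    exact ⟨(z, some z), hUV ⟨hzU, hzV⟩, z, rfl⟩
  obtain ⟨u, hu_mem, hu_tend⟩ := FrechetUrysohnSpace.closure_subset_seqClosure D hxcl
  choose zf hzf using hu_mem
  have hfst : Tendsto zf atTop (𝓝 x) := by
    have h1 : Tendsto (fun n => (u n).1) atTop (𝓝 x) :=
      (continuous_fst.tendsto _).comp hu_tend
    exact h1.congr fun n => by rw [hzf n]
  have hsnd : Tendsto (fun n => some (zf n) : ℕ → Option X) atTop (𝓝 none) := by
    have h1 : Tendsto (fun n => (u n).2) atTop (𝓝 (none : Option X)) :=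
      (continuous_snd.tendsto _).comp hu_tend
    exact h1.congr fun n => by rw [hzf n]
  refine ⟨zf, hfst, ?_⟩
  intro B hB k
  have h1 : insert none (some '' B) ∈ 𝓝 (none : Option X) :=
    (hnone _).2 ⟨mem_insert _ _, mem_of_superset hB fun z hz => Or.inr ⟨z, hz, rfl⟩⟩
  have h2 : ∀ᶠ n in atTop, zf n ∈ B := by
    filter_upwards [hsnd h1] with n hn
    rcases hn with hn | ⟨w, hwB, hw⟩
    · simp at hn
    · rwa [← Option.some_injective X hw]
  obtain ⟨n, hn1, hn2⟩ := (h2.and (eventually_ge_atTop k)).exists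
  exact ⟨n, hn2, hn1⟩

theorem stmt11 {X : Type u} [TopologicalSpace X] :
    (ProductivelyFrechetSpace X ↔
      ∀ (Y : Type u) (_ : TopologicalSpace Y),
        StronglyFrechetSpace Y → StronglyFrechetSpace (X × Y)) ∧
    (ProductivelyFrechetSpace X ↔
      ∀ (Y : Type u) (_ : TopologicalSpace Y),
        StronglyFrechetSpace Y → FrechetUrysohnSpace (X × Y)) := by
  have h1 : ProductivelyFrechetSpace X →
      ∀ (Y : Type u) (_ : TopologicalSpace Y),
        StronglyFrechetSpace Y → StronglyFrechetSpace (X × Y) :=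
    fun hP Y _ hY => prodF_imp_sf_prod hP hY
  have h2 : (∀ (Y : Type u) (_ : TopologicalSpace Y),
        StronglyFrechetSpace Y → StronglyFrechetSpace (X × Y)) →
      ∀ (Y : Type u) (_ : TopologicalSpace Y),
        StronglyFrechetSpace Y → FrechetUrysohnSpace (X × Y) :=
    fun h Y i hY => sf_imp_fu (h Y i hY)
  exact ⟨⟨h1, fun h => fu_imp_prodF (h2 h)⟩,
    ⟨fun hP => h2 (h1 hP), fu_imp_prodF⟩⟩
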